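/- For an arbitrary nonnegative self-adjoint bounded operator B on a Hilbert space and g ∈ H, the limit as x increases to 0 of ⟨(B - xI)^{-1} g, g⟩ equals ‖B^{-1/2} g‖² if g ∈ ran(B^{1/2}), and equals +∞ otherwise. -/

import Mathlib

set_option linter.unusedSectionVars false

open ContinuousLinearMap

variable {H : Type*} [NormedAddCommGroup H] [InnerProductSpace ℂ H] [CompleteSpace H]

private lemma reSymm (v w : H) : (inner ℂ v w : ℂ).re = (inner ℂ w v : ℂ).re := by
  rw [← inner_conj_symm v w]; exact Complex.conj_re _

private lemma normSq' (v : H) : (inner ℂ v v : ℂ).re = ‖v‖^2 := by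
  rw [← RCLike.re_to_complex]; exact inner_self_eq_norm_sq v

private lemma ofRealMulRe (x : ℝ) (z : ℂ) : ((x:ℂ) * z).re = x * z.re := by simp

private lemma symmB {B : H →L[ℂ] H} (hB : B.IsPositive) (a b : H) :
    (inner ℂ (B a) b : ℂ) = inner ℂ a (B b) := by
  simpa using hB.1 a b

private lemma posB {B : H →L[ℂ] H} (hB : B.IsPositive) (a : H) :
    0 ≤ (inner ℂ (B a) a : ℂ).re := by
  have := hB.re_inner_nonneg_left a; rwa [RCLike.re_to_complex] at this

private lemma normRsq {B R : H →L[ℂ] H} (hR : R.IsPositive) (hR2 : R ∘L R = B) (w : H) :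
    ‖R w‖^2 = (inner ℂ (B w) w : ℂ).re := by
  have hRR : R (R w) = B w := by rw [← hR2]; rfl
  rw [← normSq' (R w), symmB hR w (R w), hRR, reSymm w (B w)]

/-- Key inequality (A): for any test vector `w`,
`2 Re⟨g,w⟩ - Re⟨Bw,w⟩ + x‖w‖² ≤ Re⟨v,g⟩` where `v = (B-x)⁻¹ g`. -/
private lemma lemA {B : H →L[ℂ] H} (hB : B.IsPositive) {x : ℝ} (hx : x < 0)
    {v g : H} (hv : B v - (x:ℂ) • v = g) (w : H) :
    2*(inner ℂ g w : ℂ).re - (inner ℂ (B w) w : ℂ).re + x*‖w‖^2 ≤ (inner ℂ v g : ℂ).re := by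
  have hBv : B v = g + (x:ℂ) • v := by rw [← hv]; abel
  set d := v - w with hd
  have h0 : 0 ≤ (inner ℂ (B d) d : ℂ).re - x * ‖d‖^2 := by
    have h1 : x * ‖d‖^2 ≤ 0 :=
      mul_nonpos_of_nonpos_of_nonneg hx.le (sq_nonneg _)
    have := posB hB d
    linarith
  have e1 : (inner ℂ (B d) d : ℂ).re
      = (inner ℂ (B v) v : ℂ).re - (inner ℂ (B v) w : ℂ).re
        - (inner ℂ (B w) v : ℂ).re + (inner ℂ (B w) w : ℂ).re := by
    rw [hd, map_sub, inner_sub_left, inner_sub_right, inner_sub_right]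
    simp only [Complex.sub_re]
    ring
  have e2 : (inner ℂ (B v) v : ℂ).re = (inner ℂ g v : ℂ).re + x * ‖v‖^2 := by
    rw [hBv, inner_add_left, inner_smul_left, Complex.conj_ofReal, Complex.add_re,
      ofRealMulRe, normSq']
  have e3 : (inner ℂ (B v) w : ℂ).re = (inner ℂ g w : ℂ).re + x * (inner ℂ v w : ℂ).re := by
    rw [hBv, inner_add_left, inner_smul_left, Complex.conj_ofReal, Complex.add_re,
      ofRealMulRe]
  have e4 : (inner ℂ (B w) v : ℂ).re = (inner ℂ g w : ℂ).re + x * (inner ℂ v w : ℂ).re := by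
    rw [symmB hB w v, hBv, inner_add_right, inner_smul_right, Complex.add_re,
      ofRealMulRe, reSymm w g, reSymm w v]
  have e5 : ‖d‖^2 = ‖v‖^2 - 2*(inner ℂ v w : ℂ).re + ‖w‖^2 := by
    rw [hd, ← RCLike.re_to_complex]
    exact norm_sub_sq v w
  have e6 : (inner ℂ g v : ℂ).re = (inner ℂ v g : ℂ).re := reSymm g v
  rw [e1, e2, e3, e4, e5, e6] at h0
  linarith

/-- Monotonicity with quantitative remainder. -/
private lemma lemM {B : H →L[ℂ] H} (hB : B.IsPositive) {x x' : ℝ} (hx' : x' < 0)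
    (hxx' : x ≤ x') {v v' g : H} (hv : B v - (x:ℂ) • v = g)
    (hv' : B v' - (x':ℂ) • v' = g) :
    (inner ℂ v g : ℂ).re + (x' - x) * ‖v‖^2 ≤ (inner ℂ v' g : ℂ).re := by
  have hA := lemA hB hx' hv' v
  have hBv : B v = g + (x:ℂ) • v := by rw [← hv]; abel
  have e2 : (inner ℂ (B v) v : ℂ).re = (inner ℂ g v : ℂ).re + x * ‖v‖^2 := by
    rw [hBv, inner_add_left, inner_smul_left, Complex.conj_ofReal, Complex.add_re,
      ofRealMulRe, normSq']
  have e6 : (inner ℂ g v : ℂ).re = (inner ℂ v g : ℂ).re := reSymm g v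
  rw [e2, e6] at hA
  linarith

/-- Upper bound in the range case: `Re⟨v, g⟩ ≤ ‖u‖²` when `g = R u`. -/
private lemma lemUpper {B R : H →L[ℂ] H} (hB : B.IsPositive) (hR : R.IsPositive)
    (hR2 : R ∘L R = B) {x : ℝ} (hx : x < 0) {v u g : H}
    (hv : B v - (x:ℂ) • v = g) (hu : R u = g) :
    (inner ℂ v g : ℂ).re ≤ ‖u‖^2 := by
  have e1 : (inner ℂ v g : ℂ).re = (inner ℂ u (R v) : ℂ).re := by
    rw [← hu, ← symmB hR u v, reSymm v (R u), reSymm (R u) v]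
  have e2 : ‖R v‖^2 = (inner ℂ (B v) v : ℂ).re := normRsq hR hR2 v
  have hBv : B v = g + (x:ℂ) • v := by rw [← hv]; abel
  have e3 : (inner ℂ (B v) v : ℂ).re = (inner ℂ v g : ℂ).re + x * ‖v‖^2 := by
    rw [hBv, inner_add_left, inner_smul_left, Complex.conj_ofReal, Complex.add_re,
      ofRealMulRe, normSq', reSymm g v]
  have e4 : (inner ℂ u (R v) : ℂ).re ≤ ‖u‖ * ‖R v‖ := by
    rw [← RCLike.re_to_complex]; exact re_inner_le_norm u (R v)
  have h1 : x * ‖v‖^2 ≤ 0 := mul_nonpos_of_nonpos_of_nonneg hx.le (sq_nonneg _)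
  nlinarith [sq_nonneg (‖u‖ - ‖R v‖), norm_nonneg (R v), norm_nonneg u]

/-- Cauchy-type inequality: `‖R v - R v'‖² ≤ h(x') - h(x)`. -/
private lemma lemCauchy {B R : H →L[ℂ] H} (hB : B.IsPositive) (hR : R.IsPositive)
    (hR2 : R ∘L R = B) {x x' : ℝ} (hx' : x' < 0) (hxx' : x ≤ x')
    {v v' z g : H} (hv : B v - (x:ℂ) • v = g) (hv' : B v' - (x':ℂ) • v' = g)
    (hz : B z - (x:ℂ) • z = v') (hvz : v - v' = ((x - x' : ℝ):ℂ) • z) :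
    ‖R v - R v'‖^2 ≤ (inner ℂ v' g : ℂ).re - (inner ℂ v g : ℂ).re := by
  have hx : x < 0 := lt_of_le_of_lt hxx' hx'
  have hq0 : 0 ≤ (inner ℂ (B z) z : ℂ).re := posB hB z
  have e1 : ‖R v - R v'‖^2 = (x' - x)^2 * ‖R z‖^2 := by
    rw [← map_sub, hvz, map_smul, norm_smul]
    simp only [Complex.norm_real, Real.norm_eq_abs]
    rw [mul_pow, sq_abs]
    ring_nf
  have e2 : ‖R z‖^2 = (inner ℂ (B z) z : ℂ).re := normRsq hR hR2 z
  have e3 : (inner ℂ v' g : ℂ).re - (inner ℂ v g : ℂ).re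
      = (x' - x) * (inner ℂ z g : ℂ).re := by
    have hsub : v' - v = ((x' - x : ℝ):ℂ) • z := by
      have h9 : v' - v = -(v - v') := by abel
      rw [h9, hvz]
      push_cast
      module
    rw [← Complex.sub_re, ← inner_sub_left, hsub, inner_smul_left, Complex.conj_ofReal,
      ofRealMulRe]
  have hv'e : v' = B z - (x:ℂ) • z := hz.symm
  have h5 : (inner ℂ z g : ℂ) = inner ℂ (B z) v' - (x':ℂ) * inner ℂ z v' := by
    rw [← hv', inner_sub_right, inner_smul_right, symmB hB z v']
  have h6 : (inner ℂ (B z) v' : ℂ).re = ‖B z‖^2 - x * (inner ℂ (B z) z : ℂ).re := by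
    rw [hv'e, inner_sub_right, inner_smul_right, Complex.sub_re, ofRealMulRe, normSq']
  have h7 : (inner ℂ z v' : ℂ).re = (inner ℂ (B z) z : ℂ).re - x * ‖z‖^2 := by
    rw [hv'e, inner_sub_right, inner_smul_right, Complex.sub_re, ofRealMulRe,
      reSymm z (B z), normSq']
  have h8 : (inner ℂ z g : ℂ).re = (inner ℂ (B z) v' : ℂ).re - x' * (inner ℂ z v' : ℂ).re := by
    rw [h5, Complex.sub_re, ofRealMulRe]
  have e4 : (inner ℂ z g : ℂ).re = ‖B z‖^2 - (x + x') * (inner ℂ (B z) z : ℂ).re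
      + x * x' * ‖z‖^2 := by
    rw [h8, h6, h7]; ring
  rw [e1, e2, e3, e4]
  have ht : 0 ≤ x' - x := by linarith
  have h1 : 0 ≤ (x' - x) * ‖B z‖^2 := mul_nonneg ht (sq_nonneg _)
  have h2 : 0 ≤ (x' - x) * ((-x') * (inner ℂ (B z) z : ℂ).re) :=
    mul_nonneg ht (mul_nonneg (by linarith) hq0)
  have h3 : 0 ≤ (x' - x) * (x * x' * ‖z‖^2) :=
    mul_nonneg ht (mul_nonneg (by nlinarith) (sq_nonneg _))
  nlinarith [h1, h2, h3]

/-- Density: a vector orthogonal to the kernel of a self-adjoint operator is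
approximated by elements of the range. -/
private lemma lemDense {R : H →L[ℂ] H} (hR : R.IsPositive) {u : H}
    (hu : u ∈ (LinearMap.ker (R : H →ₗ[ℂ] H))ᗮ) {ε : ℝ} (hε : 0 < ε) :
    ∃ w : H, ‖u - R w‖ < ε := by
  have h1 : (LinearMap.range (R : H →ₗ[ℂ] H))ᗮ ≤ LinearMap.ker (R : H →ₗ[ℂ] H) := by
    intro v hv
    have h4 : ∀ w : H, (inner ℂ w (R v) : ℂ) = 0 := fun w => by
      have h5 := hv (R w) ⟨w, rfl⟩
      rw [← symmB hR w v]
      exact h5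
    have h6 : (inner ℂ (R v) (R v) : ℂ) = 0 := h4 (R v)
    simpa [inner_self_eq_zero] using h6
  have h2 : u ∈ ((LinearMap.range (R : H →ₗ[ℂ] H))ᗮ)ᗮ := Submodule.orthogonal_le h1 hu
  rw [Submodule.orthogonal_orthogonal_eq_closure] at h2
  have h3 : u ∈ closure (LinearMap.range (R : H →ₗ[ℂ] H) : Set H) := h2
  rw [Metric.mem_closure_iff] at h3
  obtain ⟨y, hy, hdy⟩ := h3 ε hε
  obtain ⟨w, rfl⟩ := hy
  exact ⟨w, by rwa [← dist_eq_norm]⟩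

/-- If the resolvent quadratic form stays bounded, then `g` is in the range of `R`. -/
private lemma lemBounded {B R : H →L[ℂ] H} (hB : B.IsPositive) (hR : R.IsPositive)
    (hR2 : R ∘L R = B) (g : H) (res : ℝ → (H →L[ℂ] H))
    (hresR : ∀ x : ℝ, x < 0 → ∀ a : H, B (res x a) - (x:ℂ) • (res x a) = a)
    (hresL : ∀ x : ℝ, x < 0 → ∀ a : H, res x (B a - (x:ℂ) • a) = a)
    (C : ℝ) (hC : ∀ x : ℝ, x < 0 → (inner ℂ (res x g) g : ℂ).re ≤ C) :
    g ∈ LinearMap.range (R : H →ₗ[ℂ] H) := by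
  set v : ℝ → H := fun x => res x g with hvdef
  have hv : ∀ x : ℝ, x < 0 → B (v x) - (x:ℂ) • (v x) = g := fun x hx => hresR x hx g
  -- the resolvent identity, producing z for the Cauchy lemma
  have hvz : ∀ x x' : ℝ, x < 0 → x' < 0 →
      v x - v x' = ((x - x' : ℝ):ℂ) • res x (v x') := by
    intro x x' hx hx'
    have h1 : B (v x - v x') - (x:ℂ) • (v x - v x') = ((x - x' : ℝ):ℂ) • v x' := by
      have e1 := hv x hx
      have e2 := hv x' hx'
      have e3 : B (v x - v x') - (x:ℂ) • (v x - v x')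
          = (B (v x) - (x:ℂ) • v x) - (B (v x') - (x':ℂ) • v x')
            + ((x - x' :ℝ):ℂ) • v x' := by
        rw [map_sub]
        push_cast
        module
      rw [e3, e1, e2]
      push_cast
      module
    calc v x - v x' = res x (B (v x - v x') - (x:ℂ) • (v x - v x')) :=
          (hresL x hx _).symm
      _ = res x (((x - x' : ℝ):ℂ) • v x') := by rw [h1]
      _ = ((x - x' : ℝ):ℂ) • res x (v x') := map_smul _ _ _
  -- the sequence of points
  set xs : ℕ → ℝ := fun n => -(1 / (n + 1)) with hxsdef
  have hxs_neg : ∀ n : ℕ, xs n < 0 := by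
    intro n
    have : (0:ℝ) < 1 / (n + 1) := by positivity
    simpa [hxsdef] using this
  have hxs_mono : Monotone xs := by
    intro m n hmn
    simp only [hxsdef, neg_le_neg_iff]
    apply one_div_le_one_div_of_le
    · positivity
    · have : (m:ℝ) ≤ n := Nat.cast_le.mpr hmn
      linarith
  have hxs_tendsto : Filter.Tendsto xs Filter.atTop (nhds 0) := by
    have h : Filter.Tendsto (fun n : ℕ => 1 / ((n:ℝ) + 1)) Filter.atTop (nhds 0) :=
      tendsto_one_div_add_atTop_nhds_zero_nat
    have h2 : Filter.Tendsto (fun n : ℕ => -(1 / ((n:ℝ) + 1))) Filter.atTop (nhds (-0)) :=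
      h.neg
    simpa [hxsdef] using h2
  set hs : ℕ → ℝ := fun n => (inner ℂ (v (xs n)) g : ℂ).re with hhsdef
  have hs_mono : Monotone hs := by
    intro m n hmn
    have hle := hxs_mono hmn
    have h1 := lemM hB (hxs_neg n) hle (hv _ (hxs_neg m)) (hv _ (hxs_neg n))
    have hnn : 0 ≤ (xs n - xs m) * ‖v (xs m)‖^2 :=
      mul_nonneg (by linarith) (sq_nonneg _)
    simp only [hhsdef]
    linarith
  have hs_bdd : ∀ n, hs n ≤ C := fun n => hC _ (hxs_neg n)
  obtain ⟨l, hl⟩ : ∃ l, Filter.Tendsto hs Filter.atTop (nhds l) :=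
    ⟨_, tendsto_atTop_ciSup hs_mono ⟨C, by rintro y ⟨n, rfl⟩; exact hs_bdd n⟩⟩
  have hs_cauchy : CauchySeq hs := hl.cauchySeq
  -- the approximating sequence in H
  set us : ℕ → H := fun n => R (v (xs n)) with husdef
  have key : ∀ m n : ℕ, m ≤ n → ‖us m - us n‖^2 ≤ hs n - hs m := by
    intro m n hmn
    exact lemCauchy hB hR hR2 (hxs_neg n) (hxs_mono hmn) (hv _ (hxs_neg m))
      (hv _ (hxs_neg n)) (hresR _ (hxs_neg m) (v (xs n)))
      (hvz _ _ (hxs_neg m) (hxs_neg n))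
  have hus_cauchy : CauchySeq us := by
    rw [Metric.cauchySeq_iff]
    intro ε hε
    obtain ⟨N, hN⟩ := Metric.cauchySeq_iff.1 hs_cauchy (ε^2) (by positivity)
    refine ⟨N, fun m hm n hn => ?_⟩
    have hd2 : dist (us m) (us n)^2 ≤ |hs n - hs m| := by
      rcases le_total m n with h | h
      · rw [dist_eq_norm]
        exact le_trans (key m n h) (le_abs_self _)
      · rw [dist_comm, dist_eq_norm]
        calc ‖us n - us m‖^2 ≤ hs m - hs n := key n m h
          _ ≤ |hs n - hs m| := by rw [abs_sub_comm]; exact le_abs_self _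
    have hlt : |hs n - hs m| < ε^2 := by
      have := hN n hn m hm
      rwa [Real.dist_eq] at this
    nlinarith [dist_nonneg (x := us m) (y := us n)]
  obtain ⟨uu, huu⟩ := cauchySeq_tendsto_of_complete hus_cauchy
  -- identify R uu = g
  have hRus : ∀ n, R (us n) = g + ((xs n : ℝ):ℂ) • v (xs n) := by
    intro n
    have h1 : R (us n) = B (v (xs n)) := by rw [husdef]; rw [← hR2]; rfl
    have h2 := hv _ (hxs_neg n)
    rw [h1, ← h2]; abel
  have hvx_bound : ∀ n, ‖((xs n : ℝ):ℂ) • v (xs n)‖^2 ≤ 2 * (C - hs 0) * (-(xs n)) := by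
    intro n
    have hx := hxs_neg n
    have hhalf : xs n / 2 < 0 := div_neg_of_neg_of_pos hx (by norm_num)
    have hle : xs n ≤ xs n / 2 := by linarith
    have hM := lemM hB hhalf hle (hv _ hx) (hv _ hhalf)
    have hhs0 : hs 0 ≤ (inner ℂ (v (xs n)) g : ℂ).re := hs_mono (Nat.zero_le n)
    have hCb : (inner ℂ (v (xs n / 2)) g : ℂ).re ≤ C := hC _ hhalf
    have h3 : (-(xs n) / 2) * ‖v (xs n)‖^2 ≤ C - hs 0 := by
      have he : (xs n / 2 - xs n) = -(xs n) / 2 := by ring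
      rw [← he]
      linarith
    have h4 : ‖((xs n : ℝ):ℂ) • v (xs n)‖^2 = (xs n)^2 * ‖v (xs n)‖^2 := by
      rw [norm_smul]
      simp only [Complex.norm_real, Real.norm_eq_abs]
      rw [mul_pow, sq_abs]
    rw [h4]
    have h5 := mul_le_mul_of_nonneg_left h3 (show (0:ℝ) ≤ 2 * (-(xs n)) by linarith)
    have h6 : xs n ^ 2 * ‖v (xs n)‖ ^ 2
        = 2 * (-(xs n)) * (-xs n / 2 * ‖v (xs n)‖ ^ 2) := by ring
    have h7 : 2 * (-(xs n)) * (C - hs 0) = 2 * (C - hs 0) * (-(xs n)) := by ring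
    rw [h6, ← h7]
    exact h5
  have hxv_tendsto : Filter.Tendsto (fun n => ((xs n : ℝ):ℂ) • v (xs n))
      Filter.atTop (nhds 0) := by
    rw [tendsto_zero_iff_norm_tendsto_zero]
    have hb : Filter.Tendsto (fun n => Real.sqrt (2 * (C - hs 0) * (-(xs n))))
        Filter.atTop (nhds 0) := by
      have h1 : Filter.Tendsto (fun n => 2 * (C - hs 0) * (-(xs n)))
          Filter.atTop (nhds 0) := by
        have h2 := (hxs_tendsto.neg).const_mul (2 * (C - hs 0))
        simpa using h2
      have h3 := (Real.continuous_sqrt.tendsto 0).comp h1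
      simpa [Function.comp_def] using h3
    apply squeeze_zero (fun n => norm_nonneg _) (fun n => ?_) hb
    have h2 := hvx_bound n
    have heq : ‖((xs n : ℝ):ℂ) • v (xs n)‖
        = Real.sqrt (‖((xs n : ℝ):ℂ) • v (xs n)‖^2) :=
      (Real.sqrt_sq (norm_nonneg _)).symm
    rw [heq]
    exact Real.sqrt_le_sqrt h2
  have hRu_lim : Filter.Tendsto (fun n => R (us n)) Filter.atTop (nhds g) := by
    have h1 : Filter.Tendsto (fun n => g + ((xs n : ℝ):ℂ) • v (xs n))
        Filter.atTop (nhds (g + 0)) := Filter.Tendsto.const_add g hxv_tendsto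
    simp only [add_zero] at h1
    simpa only [hRus] using h1
  have hRu_lim' : Filter.Tendsto (fun n => R (us n)) Filter.atTop (nhds (R uu)) :=
    (R.continuous.tendsto uu).comp huu
  exact ⟨uu, (tendsto_nhds_unique hRu_lim' hRu_lim)⟩

/-- For a bounded nonnegative self-adjoint operator `B` with positive
square root `R = B^{1/2}` and `g ∈ H`, the limit as `x ↑ 0` of `⟨(B - xI)⁻¹ g, g⟩`
equals `‖B^{-1/2} g‖²` when `g ∈ ran B^{1/2}` (with `B^{-1/2} g = u` the Moore–Penrose
preimage, `R u = g`, `u ⊥ ker R`), and tends to `+∞` otherwise. -/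
theorem resolvent_limit_pseudoinverse (B R : H →L[ℂ] H)
    (hB : B.IsPositive) (hR : R.IsPositive) (hR2 : R ∘L R = B) (g : H)
    (res : ℝ → (H →L[ℂ] H))
    (hres : ∀ x : ℝ, x < 0 →
      (B - x • (1 : H →L[ℂ] H)) ∘L res x = 1 ∧
      res x ∘L (B - x • (1 : H →L[ℂ] H)) = 1) :
    (∀ u : H, R u = g → u ∈ (LinearMap.ker (R : H →ₗ[ℂ] H))ᗮ →
      Filter.Tendsto (fun x : ℝ => (inner ℂ (res x g) g : ℂ).re)
        (nhdsWithin 0 (Set.Iio 0)) (nhds (‖u‖ ^ 2))) ∧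
    (g ∉ LinearMap.range (R : H →ₗ[ℂ] H) →
      Filter.Tendsto (fun x : ℝ => (inner ℂ (res x g) g : ℂ).re)
        (nhdsWithin 0 (Set.Iio 0)) Filter.atTop) := by
  have hresR : ∀ x : ℝ, x < 0 → ∀ a : H, B (res x a) - (x:ℂ) • (res x a) = a := by
    intro x hx a
    have h1 := DFunLike.congr_fun (hres x hx).1 a
    simpa [comp_apply, sub_apply, smul_apply, one_apply] using h1
  have hresL : ∀ x : ℝ, x < 0 → ∀ a : H, res x (B a - (x:ℂ) • a) = a := by
    intro x hx a
    have h1 := DFunLike.congr_fun (hres x hx).2 a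
    simpa [comp_apply, sub_apply, smul_apply, one_apply] using h1
  have hv : ∀ x : ℝ, x < 0 → B (res x g) - (x:ℂ) • (res x g) = g :=
    fun x hx => hresR x hx g
  constructor
  · -- case g = R u
    intro u hu huperp
    rw [Metric.tendsto_nhdsWithin_nhds]
    intro ε hε
    obtain ⟨w, hw⟩ := lemDense hR huperp (Real.sqrt_pos.mpr (by linarith : (0:ℝ) < ε/2))
    have hw2 : ‖u - R w‖^2 < ε/2 := by
      have h0 : 0 ≤ ‖u - R w‖ := norm_nonneg _
      nlinarith [Real.sq_sqrt (by linarith : (0:ℝ) ≤ ε/2), Real.sqrt_nonneg (ε/2)]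
    refine ⟨ε / (2 * (‖w‖^2 + 1)), by positivity, ?_⟩
    intro x hx hdx
    have hxneg : x < 0 := hx
    rw [Real.dist_eq] at hdx ⊢
    simp only [sub_zero] at hdx
    -- upper bound
    have hup : (inner ℂ (res x g) g : ℂ).re ≤ ‖u‖^2 :=
      lemUpper hB hR hR2 hxneg (hv x hxneg) hu
    -- lower bound via lemA with test vector w
    have hA := lemA hB hxneg (hv x hxneg) w
    have e1 : (inner ℂ g w : ℂ).re = (inner ℂ u (R w) : ℂ).re := by
      rw [← hu, symmB hR u w]
    have e2 : (inner ℂ (B w) w : ℂ).re = ‖R w‖^2 := (normRsq hR hR2 w).symm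
    have e3 : 2*(inner ℂ u (R w) : ℂ).re - ‖R w‖^2 = ‖u‖^2 - ‖u - R w‖^2 := by
      have h9 := @norm_sub_sq ℂ _ _ _ _ u (R w)
      rw [RCLike.re_to_complex] at h9
      linarith
    have hxw : -(ε/2) < x * ‖w‖^2 := by
      have h2 : -x < ε / (2 * (‖w‖^2 + 1)) := by
        rw [abs_lt] at hdx; linarith [hdx.1]
      have hne : (‖w‖^2 + 1) ≠ 0 := by positivity
      have h7 : ε / (2 * (‖w‖^2 + 1)) * (‖w‖^2 + 1) = ε / 2 := by
        field_simp
      have h6 : (-x) * (‖w‖^2 + 1) < ε / (2 * (‖w‖^2 + 1)) * (‖w‖^2 + 1) :=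
        mul_lt_mul_of_pos_right h2 (by positivity)
      nlinarith [h6, h7, sq_nonneg ‖w‖]
    have hlow : ‖u‖^2 - ε < (inner ℂ (res x g) g : ℂ).re := by
      have h10 : 2*(inner ℂ g w : ℂ).re - (inner ℂ (B w) w : ℂ).re + x*‖w‖^2
          = ‖u‖^2 - ‖u - R w‖^2 + x*‖w‖^2 := by
        rw [e1, e2]; linarith
      rw [h10] at hA
      linarith
    rw [abs_lt]
    constructor <;> linarith
  · -- case g ∉ range R
    intro hg
    rw [Filter.tendsto_atTop]
    intro M
    have hex : ∃ x₀ : ℝ, x₀ < 0 ∧ M ≤ (inner ℂ (res x₀ g) g : ℂ).re := by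
      by_contra hc
      push_neg at hc
      have hCb : ∀ x : ℝ, x < 0 → (inner ℂ (res x g) g : ℂ).re ≤ M :=
        fun x hx => (hc x hx).le
      exact hg (lemBounded hB hR hR2 g res hresR hresL M hCb)
    obtain ⟨x₀, hx₀, hMx₀⟩ := hex
    filter_upwards [Ioo_mem_nhdsLT hx₀] with x hx
    have hxneg : x < 0 := hx.2
    have hM := lemM hB hxneg hx.1.le (hv x₀ hx₀) (hv x hxneg)
    have hnn : 0 ≤ (x - x₀) * ‖res x₀ g‖^2 :=
      mul_nonneg (by linarith [hx.1]) (sq_nonneg _)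
    linarith
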